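/- arXiv:2403.05364 — 2 statements merged into one kernel-verified Lean document; each statement's English description precedes it below -/
import Mathlib

section
/- Fix an integer d ≥ 3 and a real number C ≥ 1. Let 𝒮 be a family of pairwise non-isomorphic finite (d+1)-uniform hypergraphs, each having at least one edge, such that: (i) for every m ≥ 1, the number of members of 𝒮 with exactly m edges is at most C^m; and (ii) every balanced member of 𝒮 with exactly m edges has at most (m + 2^{d+1} − 4)(d+1)/(2^{d+1} − 2) vertices. Then there exists a constant c > 0 (depending only on d and C) such that for all sufficiently large n there is a (d+1)-uniform hypergraph on n vertices with at least c · n^{d + 1 − (d+1)/(2^{d+1} − 2)} edges that contains no copy of any member of 𝒮. -/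
/-- A finite hypergraph with vertices labeled by natural numbers. -/
structure HG where
  verts : Finset ℕ
  edges : Finset (Finset ℕ)

/-- `M` is a `(d+1)`-uniform hypergraph: every edge is a `(d+1)`-element subset
of the vertex set. -/
def HG.Uniform (d : ℕ) (M : HG) : Prop :=
  ∀ e ∈ M.edges, e ⊆ M.verts ∧ e.card = d + 1

/-- `M` is balanced: there is a coloring of the vertices with `d + 1` colors that is
injective on every edge. -/
def HG.Balanced (d : ℕ) (M : HG) : Prop :=
  ∃ c : ℕ → Fin (d + 1), ∀ e ∈ M.edges, Set.InjOn c ↑e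

/-- Two hypergraphs are isomorphic: a bijection between vertex sets carrying edges
to edges in both directions. -/
def Isomorphic (M N : HG) : Prop :=
  ∃ f : ℕ → ℕ, Set.InjOn f ↑M.verts ∧ M.verts.image f = N.verts ∧
    ∀ e ⊆ M.verts, (e ∈ M.edges ↔ e.image f ∈ N.edges)

/-- `H` (a hypergraph on vertex type `V`) contains a copy of `M`: an injective map from
the vertices of `M` into `V` sending every edge of `M` to an edge of `H`. -/
def ContainsCopy {V : Type*} [DecidableEq V] (H : Finset (Finset V)) (M : HG) : Prop :=
  ∃ f : ℕ → V, Set.InjOn f ↑M.verts ∧ ∀ e ∈ M.edges, e.image f ∈ H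

open Finset
open scoped Classical

noncomputable section TuranAux

noncomputable section TuranAux

lemma binom_powerset {α : Type*} [DecidableEq α] (B : Finset α) (p q : ℝ) :
    ∑ A ∈ B.powerset, p ^ A.card * q ^ (B.card - A.card) = (p + q) ^ B.card := by
  have h := Finset.prod_add (fun _ : α => p) (fun _ : α => q) B
  rw [Finset.prod_const] at h
  rw [h]
  refine Finset.sum_congr rfl fun A hA => ?_
  rw [Finset.prod_const, Finset.prod_const, Finset.card_sdiff_of_subset (Finset.mem_powerset.1 hA)]

lemma fixed_powerset {α : Type*} [DecidableEq α] {B S : Finset α} (hS : S ⊆ B) (p q : ℝ) :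
    ∑ H ∈ B.powerset.filter (fun H => S ⊆ H), p ^ H.card * q ^ (B.card - H.card)
      = p ^ S.card * (p + q) ^ (B.card - S.card) := by
  have key : ∑ H ∈ B.powerset.filter (fun H => S ⊆ H), p ^ H.card * q ^ (B.card - H.card)
      = ∑ A ∈ (B \ S).powerset, p ^ (S.card + A.card) * q ^ ((B \ S).card - A.card) := by
    refine Finset.sum_bij' (fun H _ => H \ S) (fun A _ => S ∪ A) ?_ ?_ ?_ ?_ ?_
    · intro H hH
      simp only [Finset.mem_filter, Finset.mem_powerset] at hH ⊢
      exact Finset.sdiff_subset_sdiff hH.1 (Finset.Subset.refl S)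
    · intro A hA
      simp only [Finset.mem_powerset] at hA
      simp only [Finset.mem_filter, Finset.mem_powerset]
      exact ⟨Finset.union_subset hS (hA.trans Finset.sdiff_subset), Finset.subset_union_left⟩
    · intro H hH
      simp only [Finset.mem_filter, Finset.mem_powerset] at hH
      show S ∪ (H \ S) = H
      exact Finset.union_sdiff_of_subset hH.2
    · intro A hA
      simp only [Finset.mem_powerset] at hA
      have hd : Disjoint S A := Finset.disjoint_of_subset_right hA Finset.disjoint_sdiff
      show (S ∪ A) \ S = A
      exact Finset.union_sdiff_cancel_left hd
    · intro H hH
      simp only [Finset.mem_filter, Finset.mem_powerset] at hH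
      show p ^ H.card * q ^ (B.card - H.card)
          = p ^ (S.card + (H \ S).card) * q ^ ((B \ S).card - (H \ S).card)
      have h1 : (H \ S).card = H.card - S.card := Finset.card_sdiff_of_subset hH.2
      have h2 : S.card ≤ H.card := Finset.card_le_card hH.2
      have h3 : H.card ≤ B.card := Finset.card_le_card hH.1
      have h4 : (B \ S).card = B.card - S.card := Finset.card_sdiff_of_subset hS
      congr 1
      · congr 1; omega
      · congr 1; omega
  rw [key]
  have : ∀ A ∈ (B \ S).powerset, p ^ (S.card + A.card) * q ^ ((B \ S).card - A.card)
      = p ^ S.card * (p ^ A.card * q ^ ((B \ S).card - A.card)) := by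
    intro A _; rw [pow_add]; ring
  rw [Finset.sum_congr rfl this, ← Finset.mul_sum, binom_powerset,
    Finset.card_sdiff_of_subset hS]


def kap (d n : ℕ) (x : Fin n) : Fin (d + 1) := ⟨x.1 % (d + 1), Nat.mod_lt _ d.succ_pos⟩

def rainbow (d n : ℕ) : Finset (Finset (Fin n)) :=
  Finset.univ.filter (fun e => e.card = d + 1 ∧ Set.InjOn (kap d n) ↑e)

def extg (M : HG) {n : ℕ} [NeZero n] (g : {x // x ∈ M.verts} → Fin n) : ℕ → Fin n :=
  fun x => if h : x ∈ M.verts then g ⟨x, h⟩ else default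

def cop (M : HG) {n : ℕ} [NeZero n] (H : Finset (Finset (Fin n))) :
    Finset ({x // x ∈ M.verts} → Fin n) :=
  Finset.univ.filter (fun g => Function.Injective g ∧ ∀ e ∈ M.edges, e.image (extg M g) ∈ H)

def efam (M : HG) {n : ℕ} [NeZero n] (g : {x // x ∈ M.verts} → Fin n) :
    Finset (Finset (Fin n)) :=
  M.edges.image (fun e => e.image (extg M g))

variable {d n : ℕ} [NeZero n] {M : HG}

lemma mem_cop {H : Finset (Finset (Fin n))} {g : {x // x ∈ M.verts} → Fin n} :
    g ∈ cop M H ↔ Function.Injective g ∧ ∀ e ∈ M.edges, e.image (extg M g) ∈ H := by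
  simp [cop]

lemma cop_mono {H H' : Finset (Finset (Fin n))} (h : H ⊆ H') : cop M H ⊆ cop M H' := by
  intro g hg
  rw [mem_cop] at hg ⊢
  exact ⟨hg.1, fun e he => h (hg.2 e he)⟩

lemma injOn_extg {g : {x // x ∈ M.verts} → Fin n} (hg : Function.Injective g) :
    Set.InjOn (extg M g) ↑M.verts := by
  intro x hx y hy hxy
  simp only [Finset.coe_mem, Finset.mem_coe] at hx hy
  rw [extg, extg] at hxy
  simp only [dif_pos hx, dif_pos hy] at hxy
  exact congrArg Subtype.val (hg hxy)

lemma cop_nonempty_of_containsCopy {H : Finset (Finset (Fin n))}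
    (hM : M.Uniform d) (h : ContainsCopy H M) : (cop M H).Nonempty := by
  obtain ⟨f, hf, hfe⟩ := h
  refine ⟨fun x => f x.1, ?_⟩
  rw [mem_cop]
  constructor
  · intro x y hxy
    exact Subtype.ext (hf (Finset.mem_coe.2 x.2) (Finset.mem_coe.2 y.2) hxy)
  · intro e he
    have : e.image (extg M (fun x => f x.1)) = e.image f := by
      refine Finset.image_congr fun x hx => ?_
      have hxv : x ∈ M.verts := (hM e he).1 hx
      simp [extg, dif_pos hxv]
    rw [this]
    exact hfe e he

lemma containsCopy_of_cop_nonempty {H : Finset (Finset (Fin n))}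
    (h : (cop M H).Nonempty) : ContainsCopy H M := by
  obtain ⟨g, hg⟩ := h
  rw [mem_cop] at hg
  exact ⟨extg M g, injOn_extg hg.1, hg.2⟩

lemma balanced_of_mem_cop_rainbow {g : {x // x ∈ M.verts} → Fin n}
    (hM : M.Uniform d) (hg : g ∈ cop M (rainbow d n)) : M.Balanced d := by
  rw [mem_cop] at hg
  refine ⟨fun x => if h : x ∈ M.verts then kap d n (g ⟨x, h⟩) else 0, fun e he => ?_⟩
  intro x hx y hy hxy
  have hxs : x ∈ M.verts := (hM e he).1 hx
  have hys : y ∈ M.verts := (hM e he).1 hy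
  simp only [dif_pos hxs, dif_pos hys] at hxy
  have hrb := hg.2 e he
  simp only [rainbow, Finset.mem_filter, Finset.mem_univ, true_and] at hrb
  have hgx : extg M g x ∈ (e.image (extg M g) : Finset (Fin n)) :=
    Finset.mem_image_of_mem _ hx
  have hgy : extg M g y ∈ (e.image (extg M g) : Finset (Fin n)) :=
    Finset.mem_image_of_mem _ hy
  have hx' : extg M g x = g ⟨x, hxs⟩ := by simp [extg, dif_pos hxs]
  have hy' : extg M g y = g ⟨y, hys⟩ := by simp [extg, dif_pos hys]
  have : extg M g x = extg M g y := by
    refine hrb.2 (Finset.mem_coe.2 hgx) (Finset.mem_coe.2 hgy) ?_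
    simpa only [hx', hy'] using hxy
  have := hg.1 (show g ⟨x, hxs⟩ = g ⟨y, hys⟩ by rw [← hx', ← hy']; exact this)
  exact congrArg Subtype.val this

lemma image_inj_of_injOn {α β : Type*} [DecidableEq α] [DecidableEq β]
    {f : α → β} {s : Set α} (hf : Set.InjOn f s) {e₁ e₂ : Finset α}
    (h1 : ↑e₁ ⊆ s) (h2 : ↑e₂ ⊆ s) (h : e₁.image f = e₂.image f) : e₁ = e₂ := by
  ext a
  constructor
  · intro ha
    have : f a ∈ e₂.image f := h ▸ Finset.mem_image_of_mem f ha
    obtain ⟨b, hb, hba⟩ := Finset.mem_image.1 this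
    rwa [← hf (h2 hb) (h1 ha) hba]
  · intro ha
    have : f a ∈ e₁.image f := h.symm ▸ Finset.mem_image_of_mem f ha
    obtain ⟨b, hb, hba⟩ := Finset.mem_image.1 this
    rwa [← hf (h1 hb) (h2 ha) hba]

lemma efam_card (hM : M.Uniform d) {g : {x // x ∈ M.verts} → Fin n}
    (hg : Function.Injective g) : (efam M g).card = M.edges.card := by
  rw [efam]
  apply Finset.card_image_of_injOn
  intro e₁ h1 e₂ h2 h
  exact image_inj_of_injOn (injOn_extg hg) (hM e₁ h1).1 (hM e₂ h2).1 h

lemma cop_eq_filter {H : Finset (Finset (Fin n))} (hH : H ⊆ rainbow d n) :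
    cop M H = (cop M (rainbow d n)).filter (fun g => efam M g ⊆ H) := by
  ext g
  rw [Finset.mem_filter]
  simp only [mem_cop, Finset.mem_filter, efam]
  constructor
  · intro ⟨h1, h2⟩
    refine ⟨⟨h1, fun e he => hH (h2 e he)⟩, ?_⟩
    intro x hx
    obtain ⟨e, he, rfl⟩ := Finset.mem_image.1 hx
    exact h2 e he
  · intro ⟨⟨h1, _⟩, h3⟩
    exact ⟨h1, fun e he => h3 (Finset.mem_image_of_mem _ he)⟩

lemma cop_card_le : (cop M (rainbow d n)).card ≤ n ^ M.verts.card := by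
  calc (cop M (rainbow d n)).card ≤ (Finset.univ : Finset ({x // x ∈ M.verts} → Fin n)).card :=
        Finset.card_le_card (Finset.filter_subset _ _)
    _ = n ^ M.verts.card := by
        rw [Finset.card_univ, Fintype.card_fun]
        simp [Fintype.card_coe]

lemma verts_card_le_of_cop_nonempty (h : (cop M (rainbow d n)).Nonempty) :
    M.verts.card ≤ n := by
  obtain ⟨g, hg⟩ := h
  rw [mem_cop] at hg
  have := Fintype.card_le_of_injective g hg.1
  simpa [Fintype.card_coe] using this

end TuranAux

section More
variable {d n : ℕ} [NeZero n] {M : HG}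

lemma geom_le_one : ∀ k : ℕ, ∑ m ∈ Finset.Icc 1 k, ((1:ℝ)/2) ^ m ≤ 1 - (1/2) ^ k := by
  intro k
  induction k with
  | zero => simp
  | succ k ih =>
    rw [Finset.sum_Icc_succ_top (Nat.succ_le_succ (Nat.zero_le k))]
    have : ((1:ℝ)/2) ^ (k+1) = (1/2)^k * (1/2) := by ring
    nlinarith [ih]

lemma class_card_lb (hdn : d + 1 ≤ n) (i : Fin (d + 1)) :
    n / (d + 1) ≤ (Finset.univ.filter (fun x : Fin n => kap d n x = i)).card := by
  set q := n / (d + 1) with hq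
  have hmaps : ∀ j : Fin q, j.1 * (d + 1) + i.1 < n := by
    intro j
    calc j.1 * (d + 1) + i.1 < j.1 * (d + 1) + (d + 1) := by
          exact Nat.add_lt_add_left i.2 _
      _ = (j.1 + 1) * (d + 1) := by ring
      _ ≤ q * (d + 1) := Nat.mul_le_mul_right _ j.2
      _ = (d + 1) * q := Nat.mul_comm _ _
      _ ≤ n := Nat.mul_div_le n (d + 1)
  have := Finset.card_le_card_of_injOn (f := fun j : Fin q => (⟨j.1 * (d+1) + i.1, hmaps j⟩ : Fin n))
    (s := Finset.univ) (t := Finset.univ.filter (fun x : Fin n => kap d n x = i)) ?_ ?_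
  · simpa using this
  · intro j _
    simp only [Finset.coe_filter, Set.mem_setOf_eq, Finset.mem_univ, true_and]
    apply Fin.ext
    show (j.1 * (d+1) + i.1) % (d + 1) = i.1
    rw [Nat.mul_comm, Nat.mul_add_mod]
    exact Nat.mod_eq_of_lt i.2
  · intro j₁ _ j₂ _ h
    have : j₁.1 * (d+1) + i.1 = j₂.1 * (d+1) + i.1 := congrArg Fin.val h
    have : j₁.1 = j₂.1 := by
      have := Nat.add_right_cancel this
      exact Nat.eq_of_mul_eq_mul_right (Nat.succ_pos d) this
    exact Fin.ext this

lemma rainbow_card_lb (hdn : d + 1 ≤ n) :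
    (n / (d + 1)) ^ (d + 1) ≤ (rainbow d n).card := by
  classical
  set T : Finset (Fin (d+1) → Fin n) :=
    Fintype.piFinset (fun i => Finset.univ.filter (fun x : Fin n => kap d n x = i)) with hT
  have hTmem : ∀ g ∈ T, ∀ i, kap d n (g i) = i := by
    intro g hg i
    have := Fintype.mem_piFinset.1 hg i
    simpa using this
  have hginj : ∀ g ∈ T, Function.Injective g := by
    intro g hg a b hab
    have : kap d n (g a) = kap d n (g b) := by rw [hab]
    rwa [hTmem g hg a, hTmem g hg b] at this
  have hmaps : ∀ g ∈ T, Finset.univ.image g ∈ rainbow d n := by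
    intro g hg
    simp only [rainbow, Finset.mem_filter, Finset.mem_univ, true_and]
    constructor
    · rw [Finset.card_image_of_injective _ (hginj g hg), Finset.card_univ, Fintype.card_fin]
    · intro a ha b hb hab
      simp only [Finset.coe_image, Set.mem_image] at ha hb
      obtain ⟨ia, -, rfl⟩ := ha
      obtain ⟨ib, -, rfl⟩ := hb
      rw [hTmem g hg ia, hTmem g hg ib] at hab
      rw [hab]
  have hinj : Set.InjOn (fun g : Fin (d+1) → Fin n => Finset.univ.image g) ↑T := by
    intro g₁ hg₁ g₂ hg₂ h
    funext i
    have h' : Finset.univ.image g₁ = Finset.univ.image g₂ := h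
    have : g₁ i ∈ Finset.univ.image g₂ := by
      rw [← h']; exact Finset.mem_image_of_mem _ (Finset.mem_univ i)
    obtain ⟨j, -, hj⟩ := Finset.mem_image.1 this
    have hji : j = i := by
      have := congrArg (kap d n) hj
      rwa [hTmem g₂ (Finset.mem_coe.1 hg₂) j, hTmem g₁ (Finset.mem_coe.1 hg₁) i] at this
    rw [← hj, hji]
  have hcard : T.card ≤ (rainbow d n).card :=
    Finset.card_le_card_of_injOn _ hmaps hinj
  have hTcard : T.card = ∏ i : Fin (d+1),
      (Finset.univ.filter (fun x : Fin n => kap d n x = i)).card := by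
    rw [hT, Fintype.card_piFinset]
  calc (n / (d+1)) ^ (d+1) = ∏ _i : Fin (d+1), n / (d+1) := by
        rw [Finset.prod_const, Finset.card_univ, Fintype.card_fin]
    _ ≤ ∏ i : Fin (d+1), (Finset.univ.filter (fun x : Fin n => kap d n x = i)).card :=
        Finset.prod_le_prod' (fun i _ => class_card_lb hdn i)
    _ = T.card := hTcard.symm
    _ ≤ (rainbow d n).card := hcard

end More

section Expect
variable {d n : ℕ} [NeZero n] {M : HG}

lemma sum_w_one (K : Finset (Finset (Fin n))) (p : ℝ) :
    ∑ H ∈ K.powerset, p ^ H.card * (1 - p) ^ (K.card - H.card) = 1 := by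
  rw [binom_powerset]
  simp

lemma sum_w_fixed {K S : Finset (Finset (Fin n))} (hS : S ⊆ K) (p : ℝ) :
    ∑ H ∈ K.powerset.filter (fun H => S ⊆ H),
      p ^ H.card * (1 - p) ^ (K.card - H.card) = p ^ S.card := by
  rw [fixed_powerset hS]
  simp

lemma exp_card (K : Finset (Finset (Fin n))) (p : ℝ) :
    ∑ H ∈ K.powerset, (p ^ H.card * (1 - p) ^ (K.card - H.card)) * (H.card : ℝ)
      = p * K.card := by
  have hcard : ∀ H ∈ K.powerset, ((H.card : ℝ))
      = ∑ e ∈ K, (if e ∈ H then (1:ℝ) else 0) := by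
    intro H hH
    rw [Finset.sum_ite_mem, Finset.inter_eq_right.2 (Finset.mem_powerset.1 hH),
      Finset.sum_const, nsmul_eq_mul, mul_one]
  calc ∑ H ∈ K.powerset, (p ^ H.card * (1 - p) ^ (K.card - H.card)) * (H.card : ℝ)
      = ∑ H ∈ K.powerset, ∑ e ∈ K,
          (p ^ H.card * (1 - p) ^ (K.card - H.card)) * (if e ∈ H then (1:ℝ) else 0) := by
        refine Finset.sum_congr rfl fun H hH => ?_
        rw [hcard H hH, Finset.mul_sum]
    _ = ∑ e ∈ K, ∑ H ∈ K.powerset,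
          (p ^ H.card * (1 - p) ^ (K.card - H.card)) * (if e ∈ H then (1:ℝ) else 0) :=
        Finset.sum_comm
    _ = ∑ e ∈ K, p := by
        refine Finset.sum_congr rfl fun e he => ?_
        have h1 : ∀ H ∈ K.powerset,
            (p ^ H.card * (1 - p) ^ (K.card - H.card)) * (if e ∈ H then (1:ℝ) else 0)
            = if ({e} : Finset (Finset (Fin n))) ⊆ H then
                p ^ H.card * (1 - p) ^ (K.card - H.card) else 0 := by
          intro H _
          rw [mul_ite, mul_one, mul_zero]
          congr 1
          simp [Finset.singleton_subset_iff]
        rw [Finset.sum_congr rfl h1, ← Finset.sum_filter,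
          sum_w_fixed (Finset.singleton_subset_iff.2 he), Finset.card_singleton, pow_one]
    _ = p * K.card := by rw [Finset.sum_const, nsmul_eq_mul]; ring

lemma exp_cop {d : ℕ} (hM : M.Uniform d) (p : ℝ) :
    ∑ H ∈ (rainbow d n).powerset,
        (p ^ H.card * (1 - p) ^ ((rainbow d n).card - H.card)) * ((cop M H).card : ℝ)
      = ((cop M (rainbow d n)).card : ℝ) * p ^ M.edges.card := by
  set K := rainbow d n with hK
  have hcop : ∀ H ∈ K.powerset, ((cop M H).card : ℝ)
      = ∑ g ∈ cop M K, (if efam M g ⊆ H then (1:ℝ) else 0) := by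
    intro H hH
    rw [cop_eq_filter (Finset.mem_powerset.1 hH), ← Finset.sum_filter, Finset.sum_const,
      nsmul_eq_mul, mul_one]
  calc ∑ H ∈ K.powerset, (p ^ H.card * (1 - p) ^ (K.card - H.card)) * ((cop M H).card : ℝ)
      = ∑ H ∈ K.powerset, ∑ g ∈ cop M K,
          (p ^ H.card * (1 - p) ^ (K.card - H.card)) * (if efam M g ⊆ H then (1:ℝ) else 0) := by
        refine Finset.sum_congr rfl fun H hH => ?_
        rw [hcop H hH, Finset.mul_sum]
    _ = ∑ g ∈ cop M K, ∑ H ∈ K.powerset,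
          (p ^ H.card * (1 - p) ^ (K.card - H.card)) * (if efam M g ⊆ H then (1:ℝ) else 0) :=
        Finset.sum_comm
    _ = ∑ g ∈ cop M K, p ^ M.edges.card := by
        refine Finset.sum_congr rfl fun g hg => ?_
        have hginj : Function.Injective g := (mem_cop.1 hg).1
        have hefam : efam M g ⊆ K := by
          intro e he
          obtain ⟨e', he', rfl⟩ := Finset.mem_image.1 he
          exact (mem_cop.1 hg).2 e' he'
        have h1 : ∀ H ∈ K.powerset,
            (p ^ H.card * (1 - p) ^ (K.card - H.card)) * (if efam M g ⊆ H then (1:ℝ) else 0)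
            = if efam M g ⊆ H then p ^ H.card * (1 - p) ^ (K.card - H.card) else 0 := by
          intro H _
          rw [mul_ite, mul_one, mul_zero]
        rw [Finset.sum_congr rfl h1, ← Finset.sum_filter, sum_w_fixed hefam,
          efam_card hM hginj]
    _ = ((cop M K).card : ℝ) * p ^ M.edges.card := by
        rw [Finset.sum_const, nsmul_eq_mul]

end Expect

open Real
set_option maxHeartbeats 2000000

/-- Fix `d ≥ 3` and `C ≥ 1`. If `𝒮` is a family of pairwise non-isomorphic
`(d+1)`-uniform hypergraphs, each with at least one edge, having at most `C^m` members
with `m` edges, and every balanced member with `m` edges has at most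
`(m + 2^(d+1) - 4)(d+1)/(2^(d+1) - 2)` vertices, then there is `c > 0` (depending only on
`d` and `C`) such that for all sufficiently large `n` there is a `(d+1)`-uniform hypergraph
on `n` vertices with at least `c · n^(d + 1 - (d+1)/(2^(d+1) - 2))` edges containing no copy
of any member of `𝒮`. -/
theorem turan_lower_bound_for_exponential_size_families
    (d : ℕ) (hd : 3 ≤ d) (C : ℝ) (hC : 1 ≤ C) :
    ∃ c : ℝ, 0 < c ∧
      ∀ 𝒮 : Set HG,
        (∀ M ∈ 𝒮, M.Uniform d) →
        (∀ M ∈ 𝒮, M.edges.Nonempty) →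
        (∀ M ∈ 𝒮, ∀ N ∈ 𝒮, M ≠ N → ¬ Isomorphic M N) →
        (∀ m : ℕ, 1 ≤ m → {M ∈ 𝒮 | M.edges.card = m}.Finite ∧
          ({M ∈ 𝒮 | M.edges.card = m}.ncard : ℝ) ≤ C ^ m) →
        (∀ M ∈ 𝒮, M.Balanced d →
          (M.verts.card : ℝ) ≤
            (((M.edges.card : ℝ) + 2 ^ (d + 1) - 4) * (d + 1)) / (2 ^ (d + 1) - 2)) →
        ∃ N : ℕ, ∀ n : ℕ, N ≤ n →
          ∃ H : Finset (Finset (Fin n)),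
            (∀ e ∈ H, e.card = d + 1) ∧
            c * (n : ℝ) ^ ((d + 1 : ℝ) - (d + 1) / (2 ^ (d + 1) - 2)) ≤ (H.card : ℝ) ∧
            ∀ M ∈ 𝒮, ¬ ContainsCopy H M := by
  classical
  -- basic constants
  set B : ℝ := 2 ^ (d + 1) with hB
  have hB16 : (16 : ℝ) ≤ B := by
    rw [hB]
    calc (16 : ℝ) = 2 ^ 4 := by norm_num
      _ ≤ 2 ^ (d + 1) := by
          apply pow_le_pow_right₀ (by norm_num)
          omega
  have hB2 : (0 : ℝ) < B - 2 := by linarith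
  set ε : ℝ := ((d : ℝ) + 1) / (B - 2) with hε
  have hεpos : 0 < ε := by
    apply div_pos _ hB2
    positivity
  have hεkey : ε * (B - 2) = (d : ℝ) + 1 := by
    rw [hε]; field_simp
  have hCpos : (0 : ℝ) < C := lt_of_lt_of_le one_pos hC
  set δ : ℝ := 1 / (2 * C) with hδ
  have hδpos : 0 < δ := by positivity
  have hδhalf : δ ≤ 1 / 2 := by
    rw [hδ]
    rw [div_le_div_iff₀ (by positivity) (by norm_num)]
    nlinarith
  have hCδ : C * δ = 1 / 2 := by
    rw [hδ]; field_simp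
  set c : ℝ := δ / (2 * (2 * ((d : ℝ) + 1)) ^ (d + 1)) with hc
  have hcpos : 0 < c := by
    apply div_pos hδpos
    positivity
  refine ⟨c, hcpos, ?_⟩
  intro 𝒮 hU hNE _hIso hCount hBal
  -- choice of N
  obtain ⟨N₁, hN₁⟩ := exists_nat_ge ((1 / c) ^ (1 / ε) : ℝ)
  refine ⟨max (2 * (d + 1)) N₁, ?_⟩
  intro n hn
  have hn2d : 2 * (d + 1) ≤ n := le_trans (le_max_left _ _) hn
  have hnN₁ : N₁ ≤ n := le_trans (le_max_right _ _) hn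
  haveI : NeZero n := ⟨by omega⟩
  have hn1 : (1 : ℝ) ≤ (n : ℝ) := by
    have : 1 ≤ n := by omega
    exact_mod_cast this
  have hnpos : (0 : ℝ) < (n : ℝ) := lt_of_lt_of_le one_pos hn1
  -- n^ε is big
  have hnε : 1 / c ≤ (n : ℝ) ^ ε := by
    have h1 : ((1 / c) ^ (1 / ε) : ℝ) ≤ (n : ℝ) :=
      le_trans hN₁ (by exact_mod_cast hnN₁)
    have h2 : (((1 / c) ^ (1 / ε) : ℝ)) ^ ε ≤ (n : ℝ) ^ ε :=
      Real.rpow_le_rpow (Real.rpow_nonneg (by positivity) _) h1 (le_of_lt hεpos)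
    rwa [← Real.rpow_mul (by positivity : (0:ℝ) ≤ 1 / c),
      one_div_mul_cancel (ne_of_gt hεpos), Real.rpow_one] at h2
  -- the random host
  set K := rainbow d n with hK
  set p : ℝ := δ * (n : ℝ) ^ (-ε) with hp
  have hnegε : (0:ℝ) < (n : ℝ) ^ (-ε) := Real.rpow_pos_of_pos hnpos _
  have hp0 : 0 < p := mul_pos hδpos hnegε
  have hple1 : (n:ℝ) ^ (-ε) ≤ 1 :=
    Real.rpow_le_one_of_one_le_of_nonpos hn1 (by linarith)
  have hpδ : p ≤ δ := by
    rw [hp]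
    exact mul_le_of_le_one_right hδpos.le hple1
  have hp1 : p < 1 := by linarith
  -- the finite relevant family
  have hAfin : {M | M ∈ 𝒮 ∧ (cop M K).Nonempty}.Finite := by
    apply Set.Finite.subset (Set.Finite.biUnion (Set.finite_Icc 1 (2 ^ n))
      (fun m hm => (hCount m (Set.mem_Icc.1 hm).1).1))
    intro M hM
    simp only [Set.mem_setOf_eq] at hM
    refine Set.mem_biUnion (Set.mem_Icc.2 ⟨?_, ?_⟩) ⟨hM.1, rfl⟩
    · exact Finset.card_pos.2 (hNE M hM.1)
    · have hv : M.verts.card ≤ n := verts_card_le_of_cop_nonempty hM.2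
      have hsub : M.edges ⊆ M.verts.powerset :=
        fun e he => Finset.mem_powerset.2 (hU M hM.1 e he).1
      calc M.edges.card ≤ M.verts.powerset.card := Finset.card_le_card hsub
        _ = 2 ^ M.verts.card := Finset.card_powerset _
        _ ≤ 2 ^ n := Nat.pow_le_pow_right (by norm_num) hv
  set F := hAfin.toFinset with hF
  have hFm : ∀ M, M ∈ F ↔ M ∈ 𝒮 ∧ (cop M K).Nonempty := by
    intro M
    rw [hF, Set.Finite.mem_toFinset, Set.mem_setOf_eq]
  -- per-member expectation bound
  have hkeyM : ∀ M ∈ F, ((cop M K).card : ℝ) * p ^ M.edges.card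
      ≤ δ ^ M.edges.card * (n : ℝ) ^ ((d : ℝ) + 1 - 2 * ε) := by
    intro M hMF
    obtain ⟨hM𝒮, hMne⟩ := (hFm M).1 hMF
    have hMbal : M.Balanced d :=
      balanced_of_mem_cop_rainbow (hU M hM𝒮) hMne.choose_spec
    have hvb : ((M.verts.card : ℕ) : ℝ) ≤ ε * M.edges.card + ε * (B - 4) := by
      have hb := hBal M hM𝒮 hMbal
      have heq : (((M.edges.card : ℕ) : ℝ) + 2 ^ (d+1) - 4) * ((d : ℝ) + 1) / (2 ^ (d+1) - 2)
          = ε * M.edges.card + ε * (B - 4) := by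
        rw [hε, hB]
        field_simp
        ring
      rw [heq] at hb
      exact hb
    have h1 : ((cop M K).card : ℝ) ≤ (n : ℝ) ^ ((M.verts.card : ℕ) : ℝ) := by
      have hcc := cop_card_le (M := M) (n := n) (d := d)
      calc ((cop M K).card : ℝ) ≤ ((n ^ M.verts.card : ℕ) : ℝ) := by exact_mod_cast hcc
        _ = (n : ℝ) ^ ((M.verts.card : ℕ) : ℝ) := by
            rw [Nat.cast_pow, Real.rpow_natCast]
    have h2 : (n : ℝ) ^ ((M.verts.card : ℕ) : ℝ)
        ≤ (n : ℝ) ^ (ε * M.edges.card + ε * (B - 4)) :=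
      Real.rpow_le_rpow_of_exponent_le hn1 hvb
    have h3 : p ^ M.edges.card = δ ^ M.edges.card * (n : ℝ) ^ (-(ε * M.edges.card)) := by
      rw [hp, mul_pow]
      congr 1
      rw [← Real.rpow_natCast ((n : ℝ) ^ (-ε)) M.edges.card, ← Real.rpow_mul hnpos.le]
      congr 1
      ring
    have h4 : (n:ℝ) ^ (ε * M.edges.card + ε * (B - 4)) * (n:ℝ) ^ (-(ε * M.edges.card))
        = (n:ℝ) ^ ((d : ℝ) + 1 - 2 * ε) := by
      rw [← Real.rpow_add hnpos]
      congr 1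
      linear_combination hεkey
    calc ((cop M K).card : ℝ) * p ^ M.edges.card
        ≤ (n:ℝ) ^ (ε * M.edges.card + ε * (B - 4)) * p ^ M.edges.card :=
          mul_le_mul_of_nonneg_right (h1.trans h2) (pow_nonneg hp0.le _)
      _ = δ ^ M.edges.card
          * ((n:ℝ) ^ (ε * M.edges.card + ε * (B - 4)) * (n:ℝ) ^ (-(ε * M.edges.card))) := by
          rw [h3]; ring
      _ = δ ^ M.edges.card * (n : ℝ) ^ ((d : ℝ) + 1 - 2 * ε) := by rw [h4]
  -- sum of δ^m over F is at most 1
  have hsumδ : ∑ M ∈ F, δ ^ M.edges.card ≤ 1 := by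
    set mMax := F.sup (fun M => M.edges.card) with hmMax
    have hmaps : ∀ M ∈ F, M.edges.card ∈ Finset.Icc 1 mMax := by
      intro M hMF
      exact Finset.mem_Icc.2 ⟨Finset.card_pos.2 (hNE M ((hFm M).1 hMF).1), Finset.le_sup (f := fun M => M.edges.card) hMF⟩
    rw [← Finset.sum_fiberwise_of_maps_to hmaps (fun M => δ ^ M.edges.card)]
    have hbound : ∀ k ∈ Finset.Icc 1 mMax,
        ∑ M ∈ F.filter (fun M => M.edges.card = k), δ ^ M.edges.card ≤ ((1:ℝ)/2) ^ k := by
      intro k hk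
      have hk1 : 1 ≤ k := (Finset.mem_Icc.1 hk).1
      have heq1 : ∑ M ∈ F.filter (fun M => M.edges.card = k), δ ^ M.edges.card
          = ((F.filter (fun M => M.edges.card = k)).card : ℝ) * δ ^ k := by
        rw [Finset.sum_congr rfl (fun M hM => by rw [(Finset.mem_filter.1 hM).2]),
          Finset.sum_const, nsmul_eq_mul]
      rw [heq1]
      have hsub : ↑(F.filter (fun M => M.edges.card = k)) ⊆ {M | M ∈ 𝒮 ∧ M.edges.card = k} := by
        intro M hM
        simp only [Finset.coe_filter, Set.mem_setOf_eq] at hM ⊢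
        exact ⟨((hFm M).1 hM.1).1, hM.2⟩
      have hcard : (((F.filter (fun M => M.edges.card = k)).card : ℕ) : ℝ) ≤ C ^ k := by
        rw [← Set.ncard_coe_finset]
        calc ((↑(F.filter (fun M => M.edges.card = k)) : Set HG).ncard : ℝ)
            ≤ ({M | M ∈ 𝒮 ∧ M.edges.card = k}.ncard : ℝ) := by
              exact_mod_cast Set.ncard_le_ncard hsub (hCount k hk1).1
          _ ≤ C ^ k := (hCount k hk1).2
      calc ((F.filter (fun M => M.edges.card = k)).card : ℝ) * δ ^ k
          ≤ C ^ k * δ ^ k := mul_le_mul_of_nonneg_right hcard (pow_nonneg hδpos.le k)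
        _ = ((1:ℝ)/2) ^ k := by rw [← mul_pow, hCδ]
    calc ∑ k ∈ Finset.Icc 1 mMax, ∑ M ∈ F.filter (fun M => M.edges.card = k), δ ^ M.edges.card
        ≤ ∑ k ∈ Finset.Icc 1 mMax, ((1:ℝ)/2) ^ k := Finset.sum_le_sum hbound
      _ ≤ 1 - ((1:ℝ)/2) ^ mMax := geom_le_one mMax
      _ ≤ 1 := by
          have : (0:ℝ) ≤ ((1:ℝ)/2) ^ mMax := by positivity
          linarith
  -- total expected number of copies is small
  have hbad : ∑ M ∈ F, ((cop M K).card : ℝ) * p ^ M.edges.card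
      ≤ (n:ℝ) ^ ((d : ℝ) + 1 - 2 * ε) := by
    calc ∑ M ∈ F, ((cop M K).card : ℝ) * p ^ M.edges.card
        ≤ ∑ M ∈ F, δ ^ M.edges.card * (n : ℝ) ^ ((d : ℝ) + 1 - 2 * ε) :=
          Finset.sum_le_sum hkeyM
      _ = (∑ M ∈ F, δ ^ M.edges.card) * (n : ℝ) ^ ((d : ℝ) + 1 - 2 * ε) :=
          (Finset.sum_mul _ _ _).symm
      _ ≤ 1 * (n : ℝ) ^ ((d : ℝ) + 1 - 2 * ε) :=
          mul_le_mul_of_nonneg_right hsumδ (Real.rpow_nonneg hnpos.le _)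
      _ = (n : ℝ) ^ ((d : ℝ) + 1 - 2 * ε) := one_mul _
  have hbad2 : (n:ℝ) ^ ((d : ℝ) + 1 - 2 * ε) ≤ c * (n:ℝ) ^ ((d : ℝ) + 1 - ε) := by
    have h5 : (n:ℝ) ^ ((d : ℝ) + 1 - 2 * ε)
        = (n:ℝ) ^ ((d : ℝ) + 1 - ε) * (n:ℝ) ^ (-ε) := by
      rw [← Real.rpow_add hnpos]
      congr 1
      ring
    have h6 : (n:ℝ) ^ (-ε) ≤ c := by
      rw [Real.rpow_neg hnpos.le]
      have h7 : (0:ℝ) < 1 / c := by positivity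
      calc ((n:ℝ) ^ ε)⁻¹ ≤ (1 / c)⁻¹ := by
            apply inv_anti₀ h7 hnε
        _ = c := by rw [one_div, inv_inv]
    calc (n:ℝ) ^ ((d : ℝ) + 1 - 2 * ε)
        = (n:ℝ) ^ ((d : ℝ) + 1 - ε) * (n:ℝ) ^ (-ε) := h5
      _ ≤ (n:ℝ) ^ ((d : ℝ) + 1 - ε) * c :=
          mul_le_mul_of_nonneg_left h6 (Real.rpow_nonneg hnpos.le _)
      _ = c * (n:ℝ) ^ ((d : ℝ) + 1 - ε) := mul_comm _ _
  -- expected number of edges is large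
  have hgood : 2 * c * (n:ℝ) ^ ((d : ℝ) + 1 - ε) ≤ p * (K.card : ℝ) := by
    have hq : (n:ℝ) / (2 * ((d:ℝ) + 1)) ≤ ((n / (d+1) : ℕ) : ℝ) := by
      have hdm := Nat.div_add_mod n (d+1)
      have hr : n % (d+1) < d + 1 := Nat.mod_lt _ (Nat.succ_pos d)
      have hcast : ((d:ℝ)+1) * ((n / (d+1) : ℕ) : ℝ) + ((n % (d+1) : ℕ) : ℝ) = (n:ℝ) := by
        exact_mod_cast hdm
      have hrcast : ((n % (d+1) : ℕ) : ℝ) < (d:ℝ) + 1 := by exact_mod_cast hr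
      have hn2d' : 2 * ((d:ℝ) + 1) ≤ (n:ℝ) := by exact_mod_cast hn2d
      rw [div_le_iff₀ (by positivity)]
      nlinarith
    have hKlb : ((n:ℝ) / (2 * ((d:ℝ) + 1))) ^ (d+1) ≤ (K.card : ℝ) := by
      calc ((n:ℝ) / (2 * ((d:ℝ) + 1))) ^ (d+1) ≤ ((n / (d+1) : ℕ) : ℝ) ^ (d+1) :=
            pow_le_pow_left₀ (by positivity) hq _
        _ = ((((n / (d+1))^(d+1) : ℕ)) : ℝ) := by push_cast; ring
        _ ≤ (K.card : ℝ) := by exact_mod_cast rainbow_card_lb (by omega : d + 1 ≤ n)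
    have e1 : p * ((n:ℝ) / (2 * ((d:ℝ) + 1))) ^ (d+1) ≤ p * (K.card : ℝ) :=
      mul_le_mul_of_nonneg_left hKlb hp0.le
    have e2 : p * ((n:ℝ) / (2 * ((d:ℝ) + 1))) ^ (d+1) = 2 * c * (n:ℝ) ^ ((d : ℝ) + 1 - ε) := by
      rw [hp, hc, div_pow]
      have e3 : (n:ℝ) ^ ((d+1 : ℕ)) = (n:ℝ) ^ (((d+1 : ℕ)) : ℝ) := (Real.rpow_natCast _ _).symm
      have e4 : (n:ℝ) ^ ((d : ℝ) + 1 - ε) = (n:ℝ) ^ (((d+1 : ℕ)) : ℝ) * (n:ℝ) ^ (-ε) := by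
        rw [← Real.rpow_add hnpos]
        congr 1
        push_cast
        ring
      rw [e4, ← e3]
      have hpow : (0:ℝ) < (2 * ((d:ℝ) + 1)) ^ (d+1) := by positivity
      field_simp
    linarith
  -- existence of a good H₀ by averaging
  have hexp : ∑ H ∈ K.powerset, (p ^ H.card * (1 - p) ^ (K.card - H.card))
        * ((H.card : ℝ) - ∑ M ∈ F, ((cop M H).card : ℝ))
      = p * K.card - ∑ M ∈ F, ((cop M K).card : ℝ) * p ^ M.edges.card := by
    have hsplit : ∀ H ∈ K.powerset,
        (p ^ H.card * (1 - p) ^ (K.card - H.card))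
          * ((H.card : ℝ) - ∑ M ∈ F, ((cop M H).card : ℝ))
        = (p ^ H.card * (1 - p) ^ (K.card - H.card)) * (H.card : ℝ)
          - ∑ M ∈ F, (p ^ H.card * (1 - p) ^ (K.card - H.card)) * ((cop M H).card : ℝ) := by
      intro H _
      rw [mul_sub, Finset.mul_sum]
    rw [Finset.sum_congr rfl hsplit, Finset.sum_sub_distrib, exp_card]
    congr 1
    rw [Finset.sum_comm]
    exact Finset.sum_congr rfl fun M hM => exp_cop (hU M ((hFm M).1 hM).1) p
  have hex : ∃ H₀ ∈ K.powerset,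
      c * (n:ℝ) ^ ((d : ℝ) + 1 - ε) ≤ (H₀.card : ℝ) - ∑ M ∈ F, ((cop M H₀).card : ℝ) := by
    by_contra hcon
    push_neg at hcon
    have hlt : ∑ H ∈ K.powerset, (p ^ H.card * (1 - p) ^ (K.card - H.card))
          * ((H.card : ℝ) - ∑ M ∈ F, ((cop M H).card : ℝ))
        < ∑ H ∈ K.powerset, (p ^ H.card * (1 - p) ^ (K.card - H.card))
          * (c * (n:ℝ) ^ ((d : ℝ) + 1 - ε)) := by
      apply Finset.sum_lt_sum_of_nonempty
        ⟨∅, Finset.mem_powerset.2 (Finset.empty_subset K)⟩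
      intro H hH
      exact mul_lt_mul_of_pos_left (hcon H hH)
        (mul_pos (pow_pos hp0 _) (pow_pos (by linarith) _))
    rw [← Finset.sum_mul, sum_w_one, one_mul, hexp] at hlt
    have := hbad.trans hbad2
    linarith
  obtain ⟨H₀, hH₀K, hH₀⟩ := hex
  -- deletion
  obtain ⟨e₀, he₀⟩ : ∃ e₀ : HG → Finset ℕ, ∀ M, M.edges.Nonempty → e₀ M ∈ M.edges :=
    ⟨fun M => if h : M.edges.Nonempty then h.choose else ∅,
      fun M h => by simp only [dif_pos h]; exact h.choose_spec⟩
  set D := F.biUnion (fun M => (cop M H₀).image (fun g => (e₀ M).image (extg M g))) with hD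
  refine ⟨H₀ \ D, ?_, ?_, ?_⟩
  · intro e he
    have heK : e ∈ K := Finset.mem_powerset.1 hH₀K (Finset.mem_sdiff.1 he).1
    rw [hK] at heK
    simp only [rainbow, Finset.mem_filter] at heK
    exact heK.2.1
  · have hDc : (D.card : ℝ) ≤ ∑ M ∈ F, ((cop M H₀).card : ℝ) := by
      have h7 : D.card ≤ ∑ M ∈ F, ((cop M H₀).image (fun g => (e₀ M).image (extg M g))).card :=
        Finset.card_biUnion_le
      have h8 : ∑ M ∈ F, ((cop M H₀).image (fun g => (e₀ M).image (extg M g))).card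
          ≤ ∑ M ∈ F, (cop M H₀).card :=
        Finset.sum_le_sum fun M _ => Finset.card_image_le
      calc (D.card : ℝ) ≤ ((∑ M ∈ F, (cop M H₀).card : ℕ) : ℝ) := by
            exact_mod_cast h7.trans h8
        _ = ∑ M ∈ F, ((cop M H₀).card : ℝ) := by push_cast; rfl
    have h9 : (H₀.card : ℝ) ≤ (((H₀ \ D).card : ℕ) : ℝ) + (D.card : ℝ) := by
      exact_mod_cast Finset.card_le_card_sdiff_add_card
    linarith
  · intro M hM𝒮 hcontain
    have hgne := cop_nonempty_of_containsCopy (hU M hM𝒮) hcontain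
    obtain ⟨g, hg'⟩ := hgne
    have hsdK : H₀ \ D ⊆ K := (Finset.sdiff_subset).trans (Finset.mem_powerset.1 hH₀K)
    have hgK : g ∈ cop M K := cop_mono hsdK hg'
    have hMF : M ∈ F := (hFm M).2 ⟨hM𝒮, ⟨g, hgK⟩⟩
    have hg₀ : g ∈ cop M H₀ := cop_mono Finset.sdiff_subset hg'
    have hedD : (e₀ M).image (extg M g) ∈ D :=
      Finset.mem_biUnion.2 ⟨M, hMF, Finset.mem_image_of_mem _ hg₀⟩
    have hedH' : (e₀ M).image (extg M g) ∈ H₀ \ D :=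
      (mem_cop.1 hg').2 _ (he₀ M (hNE M hM𝒮))
    exact (Finset.mem_sdiff.1 hedH').2 hedD

end TuranAux
end

section
/- Let d ≥ 1 and let H be a (d+1)-uniform hypergraph on an n-element vertex set V (n ≥ 2) with e edges. Then there exist two distinct vertices u, v ∈ V such that the number of d-element subsets τ of V \ {u, v} with both τ ∪ {u} ∈ H and τ ∪ {v} ∈ H is at least ( ((d+1)e)^2 / binom(n, d) − (d+1)e ) / (2 · binom(n, 2)). -/
open Finset

/-- In a `(d+1)`-uniform hypergraph `H` on an `n`-element vertex set
(`n ≥ 2`) with `e` edges, there are two distinct vertices `u, v` such that the number of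
`d`-element subsets `τ ⊆ V \ {u, v}` with both `τ ∪ {u} ∈ H` and `τ ∪ {v} ∈ H` is at
least `( ((d+1)e)² / choose n d − (d+1)e ) / (2 · choose n 2)`. -/
theorem exists_pair_with_large_common_link (d : ℕ) (hd : 1 ≤ d) {V : Type*} [Fintype V]
    [DecidableEq V] (H : Finset (Finset V)) (hH : ∀ t ∈ H, t.card = d + 1)
    (n e : ℕ) (hn : Fintype.card V = n) (hn2 : 2 ≤ n) (he : H.card = e) :
    ∃ u v : V, u ≠ v ∧
      ((((d : ℝ) + 1) * e) ^ 2 / (n.choose d) - ((d : ℝ) + 1) * e) / (2 * n.choose 2) ≤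
        ((((Finset.univ \ {u, v}).powersetCard d).filter
            (fun τ => insert u τ ∈ H ∧ insert v τ ∈ H)).card : ℝ) := by
  classical
  subst hn he
  set n := Fintype.card V with hn
  -- the family of all d-subsets of V
  set T : Finset (Finset V) := Finset.univ.powersetCard d with hT
  -- the "link" of a d-set τ: vertices extending τ to an edge
  set S : Finset V → Finset V :=
    fun τ => Finset.univ.filter (fun w => w ∉ τ ∧ insert w τ ∈ H) with hS
  set deg : Finset V → ℕ := fun τ => (S τ).card with hdeg
  -- number of common extensions of a pair
  set N : V × V → ℕ :=
    fun p => (T.filter (fun τ => p.1 ∈ S τ ∧ p.2 ∈ S τ)).card with hN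
  -- Lemma A : ∑_{τ∈T} deg τ = (d+1) * |H|
  have lemA : ∑ τ ∈ T, deg τ = (d + 1) * H.card := by
    have h1 : ∑ τ ∈ T, deg τ = (T.sigma S).card := (Finset.card_sigma T S).symm
    have h2 : (T.sigma S).card = (H.sigma fun t => t).card := by
      refine Finset.card_bij' (fun a _ => ⟨insert a.2 a.1, a.2⟩)
        (fun b _ => ⟨b.1.erase b.2, b.2⟩) ?_ ?_ ?_ ?_
      · rintro ⟨τ, w⟩ ha
        simp only [Finset.mem_sigma, hT, hS, Finset.mem_filter, Finset.mem_univ,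
          true_and, Finset.mem_powersetCard] at ha
        simp [ha.2.2]
      · rintro ⟨t, w⟩ hb
        simp only [Finset.mem_sigma] at hb
        simp only [Finset.mem_sigma, hT, hS, Finset.mem_filter, Finset.mem_univ,
          true_and, Finset.mem_powersetCard]
        refine ⟨⟨Finset.subset_univ _, ?_⟩, Finset.notMem_erase _ _, ?_⟩
        · rw [Finset.card_erase_of_mem hb.2, hH _ hb.1]
          omega
        · rw [Finset.insert_erase hb.2]; exact hb.1
      · rintro ⟨τ, w⟩ ha
        simp only [Finset.mem_sigma, hT, hS, Finset.mem_filter, Finset.mem_univ,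
          true_and, Finset.mem_powersetCard] at ha
        simp [Finset.erase_insert ha.2.1]
      · rintro ⟨t, w⟩ hb
        simp only [Finset.mem_sigma] at hb
        simp [Finset.insert_erase hb.2]
    have h3 : (H.sigma fun t => t).card = ∑ t ∈ H, t.card := Finset.card_sigma H _
    rw [h1, h2, h3, Finset.sum_congr rfl (fun t ht => hH t ht), Finset.sum_const,
      smul_eq_mul, mul_comm]
  -- Lemma B : ∑_{τ∈T} |offDiag (S τ)| = ∑_{p ∈ offDiag univ} N p
  have lemB : ∑ τ ∈ T, (S τ).offDiag.card = ∑ p ∈ Finset.univ.offDiag, N p := by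
    have key : ∀ τ, (S τ).offDiag
        = Finset.univ.offDiag.filter (fun p : V × V => p.1 ∈ S τ ∧ p.2 ∈ S τ) := by
      intro τ
      ext p
      simp only [Finset.mem_offDiag, Finset.mem_filter, Finset.mem_univ, true_and]
      tauto
    calc ∑ τ ∈ T, (S τ).offDiag.card
        = ∑ τ ∈ T, ∑ p ∈ Finset.univ.offDiag,
            (if p.1 ∈ S τ ∧ p.2 ∈ S τ then 1 else 0) := by
          refine Finset.sum_congr rfl fun τ _ => ?_
          rw [key τ, Finset.card_filter]
      _ = ∑ p ∈ Finset.univ.offDiag, ∑ τ ∈ T,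
            (if p.1 ∈ S τ ∧ p.2 ∈ S τ then 1 else 0) := Finset.sum_comm
      _ = ∑ p ∈ Finset.univ.offDiag, N p := by
          refine Finset.sum_congr rfl fun p _ => ?_
          simp only [hN, Finset.card_filter]
  -- Lemma C : identification of N with the statement's count
  have lemC : ∀ u v : V, N (u, v)
      = (((Finset.univ \ {u, v}).powersetCard d).filter
          (fun τ => insert u τ ∈ H ∧ insert v τ ∈ H)).card := by
    intro u v
    have hset : (T.filter fun τ => u ∈ S τ ∧ v ∈ S τ)
        = ((Finset.univ \ {u, v}).powersetCard d).filter
            (fun τ => insert u τ ∈ H ∧ insert v τ ∈ H) := by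
      ext τ
      simp only [Finset.mem_filter, hT, hS, Finset.mem_powersetCard, Finset.mem_univ,
        true_and, Finset.subset_sdiff, Finset.disjoint_insert_right,
        Finset.disjoint_singleton_right, Finset.subset_univ]
      tauto
    simp only [hN]
    rw [hset]
  -- pass to the reals
  set D : ℝ := ((d : ℝ) + 1) * H.card with hD
  have hDsum : ∑ τ ∈ T, (deg τ : ℝ) = D := by
    rw [← Nat.cast_sum, lemA]; push_cast; ring
  have hDnn : 0 ≤ D := by positivity
  have hTcard : (T.card : ℝ) = (n.choose d : ℝ) := by
    rw [hT, Finset.card_powersetCard, Finset.card_univ]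
  -- sum of N over offDiag
  have hNsum : ∑ p ∈ Finset.univ.offDiag, (N p : ℝ)
      = (∑ τ ∈ T, (deg τ : ℝ) ^ 2) - D := by
    have : ∀ τ, ((S τ).offDiag.card : ℝ) = (deg τ : ℝ) ^ 2 - (deg τ : ℝ) := by
      intro τ
      have hle : deg τ ≤ deg τ * deg τ := by
        rcases Nat.eq_zero_or_pos (deg τ) with h | h
        · simp [h]
        · exact Nat.le_mul_of_pos_left _ h
      rw [Finset.offDiag_card, Nat.cast_sub hle]
      push_cast; ring
    rw [← Nat.cast_sum, ← lemB, Nat.cast_sum, Finset.sum_congr rfl fun τ _ => this τ,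
      Finset.sum_sub_distrib, hDsum]
  -- Cauchy–Schwarz
  have hCS : D ^ 2 ≤ (n.choose d : ℝ) * ∑ τ ∈ T, (deg τ : ℝ) ^ 2 := by
    rw [← hDsum, ← hTcard]
    exact sq_sum_le_card_mul_sum_sq
  -- size of the off-diagonal
  have hM : ((Finset.univ.offDiag (α := V)).card : ℝ) = 2 * (n.choose 2 : ℝ) := by
    have hdvd : 2 ∣ n * (n - 1) := by
      rcases Nat.even_or_odd n with h | h
      · exact Dvd.dvd.mul_right h.two_dvd _
      · exact Dvd.dvd.mul_left (Nat.Odd.sub_odd h odd_one).two_dvd _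
    have h2 : 2 * n.choose 2 = n * n - n := by
      rw [Nat.choose_two_right, Nat.mul_div_cancel' hdvd, Nat.mul_sub_left_distrib,
        mul_one]
    rw [Finset.offDiag_card, Finset.card_univ, ← hn, ← h2]
    push_cast
    ring
  have hMpos : (0 : ℝ) < ((Finset.univ.offDiag (α := V)).card : ℝ) := by
    have : (Finset.univ.offDiag (α := V)).Nonempty := by
      obtain ⟨a, b, hab⟩ := Fintype.exists_pair_of_one_lt_card (by omega : 1 < Fintype.card V)
      exact ⟨(a, b), Finset.mem_offDiag.2 ⟨Finset.mem_univ _, Finset.mem_univ _, hab⟩⟩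
    exact_mod_cast Finset.card_pos.2 this
  -- handle degenerate case choose n d = 0
  rcases Nat.eq_zero_or_pos (n.choose d) with hC0 | hCpos
  · obtain ⟨a, b, hab⟩ := Fintype.exists_pair_of_one_lt_card (by omega : 1 < Fintype.card V)
    refine ⟨a, b, hab, ?_⟩
    have : ((((d : ℝ) + 1) * H.card) ^ 2 / (n.choose d) - ((d : ℝ) + 1) * H.card)
        / (2 * n.choose 2) ≤ 0 := by
      rw [hC0]
      push_cast
      rw [div_zero, zero_sub]
      apply div_nonpos_of_nonpos_of_nonneg
      · simpa using hDnn
      · positivity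
    exact this.trans (by positivity)
  · -- pigeonhole
    have hCpos' : (0 : ℝ) < (n.choose d : ℝ) := by exact_mod_cast hCpos
    have pigeon : ∃ p ∈ Finset.univ.offDiag (α := V),
        (∑ q ∈ Finset.univ.offDiag (α := V), (N q : ℝ)) / ((Finset.univ.offDiag (α := V)).card : ℝ) ≤ (N p : ℝ) := by
      by_contra hcon
      push_neg at hcon
      have hne : (Finset.univ.offDiag (α := V)).Nonempty :=
        Finset.card_pos.1 (by exact_mod_cast hMpos)
      have := Finset.sum_lt_sum_of_nonempty hne hcon
      rw [Finset.sum_const, nsmul_eq_mul, mul_div_cancel₀ _ (ne_of_gt hMpos)] at this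
      exact lt_irrefl _ this
    obtain ⟨p, hp, hple⟩ := pigeon
    obtain ⟨-, -, hne⟩ := Finset.mem_offDiag.1 hp
    refine ⟨p.1, p.2, hne, ?_⟩
    rw [← lemC p.1 p.2]
    refine le_trans ?_ hple
    rw [hNsum, hM]
    have hc : (0 : ℝ) < 2 * (n.choose 2 : ℝ) := hM ▸ hMpos
    have hnum : D ^ 2 / (n.choose d : ℝ) - D ≤ (∑ τ ∈ T, (deg τ : ℝ) ^ 2) - D := by
      have h1 : D ^ 2 / (n.choose d : ℝ) ≤ ∑ τ ∈ T, (deg τ : ℝ) ^ 2 :=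
        (div_le_iff₀ hCpos').2 (by linarith [hCS])
      linarith
    exact div_le_div_of_nonneg_right hnum hc.le |>.trans_eq rfl
end
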